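/- Let B : ℝ → ℝ be differentiable on [0,1], strictly positive on [0,1], with deriv B ≥ 0 on [0,1] and deriv B nonincreasing (antitone) on [0,1]. Then the function A(x) := (1−x)·B(x) is quasiconcave on the interval [0,1]. -/
import Mathlib


/-- Lemma 1: for a differentiable, strictly positive function `B` on `[0,1]` with
nonnegative and nonincreasing derivative on `[0,1]`, the function
`A x = (1 - x) * B x` is quasiconcave on `[0,1]`. -/
theorem quasiconcave_one_sub_mul
    (B : ℝ → ℝ)
    (hdiff : DifferentiableOn ℝ B (Set.Icc 0 1))
    (hpos : ∀ x ∈ Set.Icc (0:ℝ) 1, 0 < B x)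
    (hderiv_nonneg : ∀ x ∈ Set.Icc (0:ℝ) 1, 0 ≤ deriv B x)
    (hderiv_anti : AntitoneOn (deriv B) (Set.Icc 0 1)) :
    QuasiconcaveOn ℝ (Set.Icc (0:ℝ) 1) (fun x => (1 - x) * B x) := by
  have hint : interior (Set.Icc (0:ℝ) 1) = Set.Ioo 0 1 := interior_Icc
  have hIooIcc : Set.Ioo (0:ℝ) 1 ⊆ Set.Icc 0 1 := Set.Ioo_subset_Icc_self
  -- B is monotone on [0,1]
  have hBmono : MonotoneOn B (Set.Icc (0:ℝ) 1) := by
    apply monotoneOn_of_deriv_nonneg (convex_Icc 0 1) hdiff.continuousOn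
    · rw [hint]; exact hdiff.mono hIooIcc
    · intro x hx
      rw [hint] at hx
      exact hderiv_nonneg x (hIooIcc hx)
  -- derivative formula on the interior
  have hderivA : ∀ x ∈ Set.Ioo (0:ℝ) 1,
      HasDerivAt (fun x => (1 - x) * B x) ((-1) * B x + (1 - x) * deriv B x) x := by
    intro x hx
    have hmem : Set.Icc (0:ℝ) 1 ∈ nhds x := by
      rw [← hint] at hx
      exact mem_interior_iff_mem_nhds.mp hx
    have hBx : HasDerivAt B (deriv B x) x :=
      ((hdiff x (hIooIcc hx)).differentiableAt hmem).hasDerivAt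
    exact ((hasDerivAt_id x).const_sub 1).mul hBx
  have hconc : ConcaveOn ℝ (Set.Icc (0:ℝ) 1) (fun x => (1 - x) * B x) := by
    apply AntitoneOn.concaveOn_of_deriv (convex_Icc 0 1)
    · exact (continuousOn_const.sub continuousOn_id).mul hdiff.continuousOn
    · rw [hint]
      intro x hx
      exact (hderivA x hx).differentiableAt.differentiableWithinAt
    · rw [hint]
      intro x hx y hy hxy
      rw [(hderivA x hx).deriv, (hderivA y hy).deriv]
      have hx' := hIooIcc hx
      have hy' := hIooIcc hy
      have h1 : B x ≤ B y := hBmono hx' hy' hxy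
      have h2 : (1 - y) * deriv B y ≤ (1 - x) * deriv B x := by
        apply mul_le_mul (by linarith) (hderiv_anti hx' hy' hxy)
          (hderiv_nonneg y hy') (by linarith [hx'.2])
      linarith
  exact hconc.quasiconcaveOn
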